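/- The function x ↦ x² · coth²(x/4) is strictly increasing on the interval (0, ∞), where coth t = cosh t / sinh t. -/

import Mathlib

theorem strictMonoOn_sq_mul_coth_sq :
    StrictMonoOn (fun x : ℝ => x ^ 2 * (Real.cosh (x / 4) / Real.sinh (x / 4)) ^ 2)
      (Set.Ioi (0 : ℝ)) := by
  have hg : StrictMonoOn (fun x : ℝ => x * (Real.cosh (x / 4) / Real.sinh (x / 4)))
      (Set.Ioi 0) := by
    apply strictMonoOn_of_deriv_pos (convex_Ioi 0)
    · apply ContinuousOn.mul continuousOn_id
      apply ContinuousOn.div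
      · exact (Real.continuous_cosh.comp (continuous_id.div_const 4)).continuousOn
      · exact (Real.continuous_sinh.comp (continuous_id.div_const 4)).continuousOn
      · intro x hx
        have hx0 : (0:ℝ) < x := hx
        exact (Real.sinh_pos_iff.2 (by linarith)).ne'
    · intro x hx
      rw [interior_Ioi] at hx
      have hx0 : (0:ℝ) < x := hx
      have ht : 0 < x / 4 := by linarith
      have hs : 0 < Real.sinh (x / 4) := Real.sinh_pos_iff.2 ht
      have h1 : HasDerivAt (fun x : ℝ => x / 4) (1 / 4) x := (hasDerivAt_id x).div_const 4
      have hc : HasDerivAt (fun x : ℝ => Real.cosh (x / 4)) (Real.sinh (x / 4) * (1 / 4)) x :=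
        (Real.hasDerivAt_cosh _).comp x h1
      have hsd : HasDerivAt (fun x : ℝ => Real.sinh (x / 4)) (Real.cosh (x / 4) * (1 / 4)) x :=
        (Real.hasDerivAt_sinh _).comp x h1
      have hdiv := hc.div hsd hs.ne'
      have hd0 := (hasDerivAt_id x).mul hdiv
      have hd : HasDerivAt (fun x : ℝ => x * (Real.cosh (x / 4) / Real.sinh (x / 4)))
          ((Real.cosh (x / 4) * Real.sinh (x / 4) - x / 4) / Real.sinh (x / 4) ^ 2) x := by
        refine hd0.congr_deriv ?_
        symm
        simp only [Pi.div_apply, id]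
        have hid : Real.cosh (x / 4) ^ 2 - Real.sinh (x / 4) ^ 2 = 1 :=
          Real.cosh_sq_sub_sinh_sq (x / 4)
        field_simp
        linear_combination x * hid
      rw [hd.deriv]
      have h1' : (1:ℝ) ≤ Real.cosh (x / 4) := Real.one_le_cosh _
      have h2 : x / 4 < Real.sinh (x / 4) := Real.self_lt_sinh_iff.2 ht
      apply div_pos
      · nlinarith
      · positivity
  intro a ha b hb hab
  have hga := hg ha hb hab
  have hpos : 0 < a * (Real.cosh (a / 4) / Real.sinh (a / 4)) := by
    have ha0 : (0:ℝ) < a := ha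
    have hs : 0 < Real.sinh (a / 4) := Real.sinh_pos_iff.2 (by linarith)
    have hc : 0 < Real.cosh (a / 4) := Real.cosh_pos _
    positivity
  simp only
  nlinarith [hga, hpos]
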